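/- Let F : ℝ → ℝ satisfy F(z) = F(c − z) for all z, and define stat(g) = Σ_{0 ≤ i < j < n} F(g_i − g_j) for g ∈ 𝒢^n. Then stat(C(g)) = stat(g) for every g ∈ 𝒢^n, where C(g_0,…,g_{n-1}) = (g_1,…,g_{n-1}, g_0 − c). Consequently, for all k ∈ {0,…,n−1}, the generating function Σ_{g k-skeletal} t^{stat(g)} equals Σ_{h (n−1)-skeletal} t^{stat(h)}. -/

import Mathlib

/-- Integer area vector. -/
def IsAreaVecZ {n : ℕ} (m : ℤ) (g : Fin (n + 1) → ℤ) : Prop :=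
  ∀ i : Fin n, g i.succ ≤ g i.castSucc + m

/-- Integer `k`-skeletal area vector. -/
def IsSkeletalZ {n : ℕ} (c m : ℤ) (k : ℕ) (g : Fin (n + 1) → ℤ) : Prop :=
  IsAreaVecZ m g ∧ g 0 ≤ c ∧
  (∀ i : Fin (n + 1), n - k ≤ (i : ℕ) → 0 < g i) ∧
  ¬ ∃ s : ℕ, s + k ≤ n ∧ ∀ j : Fin (n + 1), s ≤ (j : ℕ) → (j : ℕ) ≤ s + k → c < g j

/-- The cycling operator on integer vectors. -/
def cycZ {n : ℕ} (c : ℤ) (g : Fin (n + 1) → ℤ) : Fin (n + 1) → ℤ :=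
  fun i => if h : (i : ℕ) + 1 < n + 1 then g ⟨(i : ℕ) + 1, h⟩ else g 0 - c

/-- `stat(g) = Σ_{i < j} F(g_i - g_j)`. -/
noncomputable def statF {n : ℕ} (F : ℝ → ℝ) (g : Fin (n + 1) → ℤ) : ℝ :=
  ∑ p ∈ Finset.univ.filter (fun p : Fin (n + 1) × Fin (n + 1) => p.1 < p.2),
    F ((g p.1 : ℝ) - (g p.2 : ℝ))

namespace Stmt19Aux

/-- Window of length `n+1` of `f` starting at `t`. -/
def winZ (n : ℕ) (f : ℤ → ℤ) (t : ℤ) : Fin (n + 1) → ℤ := fun i => f (t + (i : ℕ))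

/-- Periodic-with-drift extension of a vector. -/
def extZ (n : ℕ) (c : ℤ) (g : Fin (n + 1) → ℤ) (j : ℤ) : ℤ :=
  g ⟨(j % ((n : ℤ) + 1)).toNat, by
    have h1 : 0 ≤ j % ((n : ℤ) + 1) := Int.emod_nonneg _ (by positivity)
    have h2 : j % ((n : ℤ) + 1) < (n : ℤ) + 1 := Int.emod_lt_of_pos _ (by positivity)
    omega⟩ - (j / ((n : ℤ) + 1)) * c

lemma exists_decomp (n : ℕ) (j : ℤ) :
    ∃ (q : ℤ) (r : ℕ), r ≤ n ∧ j = ((n : ℤ) + 1) * q + r := by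
  refine ⟨j / ((n : ℤ) + 1), (j % ((n : ℤ) + 1)).toNat, ?_, ?_⟩
  · have h1 : 0 ≤ j % ((n : ℤ) + 1) := Int.emod_nonneg _ (by positivity)
    have h2 : j % ((n : ℤ) + 1) < (n : ℤ) + 1 := Int.emod_lt_of_pos _ (by positivity)
    omega
  · have h1 : 0 ≤ j % ((n : ℤ) + 1) := Int.emod_nonneg _ (by positivity)
    have := Int.mul_ediv_add_emod j ((n : ℤ) + 1)
    omega

lemma extZ_apply (n : ℕ) (c : ℤ) (g : Fin (n + 1) → ℤ) (q : ℤ) (r : ℕ) (hr : r ≤ n) :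
    extZ n c g (((n : ℤ) + 1) * q + r) = g ⟨r, by omega⟩ - q * c := by
  have hb : (0 : ℤ) < (n : ℤ) + 1 := by positivity
  have e1 : (((n : ℤ) + 1) * q + (r : ℤ)) % ((n : ℤ) + 1) = r := by
    rw [add_comm, Int.add_mul_emod_self_left, Int.emod_eq_of_lt (by positivity) (by omega)]
  have e2 : (((n : ℤ) + 1) * q + (r : ℤ)) / ((n : ℤ) + 1) = q := by
    rw [add_comm, Int.add_mul_ediv_left _ _ (by omega),
      Int.ediv_eq_zero_of_lt (by positivity) (by omega), zero_add]
  simp only [extZ, e1, e2, Int.toNat_natCast]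

lemma extZ_coe (n : ℕ) (c : ℤ) (g : Fin (n + 1) → ℤ) (i : ℕ) (hi : i ≤ n) :
    extZ n c g i = g ⟨i, by omega⟩ := by
  have := extZ_apply n c g 0 i hi
  simpa using this

lemma winZ_extZ_zero (n : ℕ) (c : ℤ) (g : Fin (n + 1) → ℤ) : winZ n (extZ n c g) 0 = g := by
  funext i
  simp only [winZ, zero_add]
  rw [extZ_coe n c g i (by omega)]

lemma extZ_rec (n : ℕ) (c : ℤ) (g : Fin (n + 1) → ℤ) (j : ℤ) :
    extZ n c g (j + ((n : ℤ) + 1)) = extZ n c g j - c := by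
  obtain ⟨q, r, hr, rfl⟩ := exists_decomp n j
  have e : ((n : ℤ) + 1) * q + r + ((n : ℤ) + 1) = ((n : ℤ) + 1) * (q + 1) + r := by ring
  rw [e, extZ_apply n c g (q + 1) r hr, extZ_apply n c g q r hr]
  ring

lemma shift_of_rec {n : ℕ} {c : ℤ} {f : ℤ → ℤ}
    (hrec : ∀ j, f (j + ((n : ℤ) + 1)) = f j - c) (x : ℤ) (q : ℤ) :
    f (x + ((n : ℤ) + 1) * q) = f x - q * c := by
  induction q using Int.induction_on with
  | zero => simp
  | succ i ih =>
    have : x + ((n : ℤ) + 1) * ((i : ℤ) + 1) = (x + ((n : ℤ) + 1) * i) + ((n : ℤ) + 1) := by ring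
    rw [this, hrec, ih]; ring
  | pred i ih =>
    have h := hrec (x + ((n : ℤ) + 1) * (-(i : ℤ) - 1))
    have e : x + ((n : ℤ) + 1) * (-(i : ℤ) - 1) + ((n : ℤ) + 1) = x + ((n : ℤ) + 1) * (-(i : ℤ)) := by
      ring
    rw [e, ih] at h
    have : f (x + ((n : ℤ) + 1) * (-(i : ℤ) - 1)) = f x - (-(i : ℤ)) * c + c := by omega
    rw [this]; ring

lemma extZ_winZ {n : ℕ} {c : ℤ} {f : ℤ → ℤ}
    (hrec : ∀ j, f (j + ((n : ℤ) + 1)) = f j - c) (t j : ℤ) :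
    extZ n c (winZ n f t) j = f (t + j) := by
  obtain ⟨q, r, hr, rfl⟩ := exists_decomp n j
  rw [extZ_apply n c _ q r hr]
  simp only [winZ]
  have e : t + (((n : ℤ) + 1) * q + r) = (t + r) + ((n : ℤ) + 1) * q := by ring
  rw [e, shift_of_rec hrec]


/-- `ℤ`-level `k`-skeletal condition at time `t`. -/
def GoodZ (n : ℕ) (c : ℤ) (k : ℕ) (f : ℤ → ℤ) (t : ℤ) : Prop :=
  f t ≤ c ∧ (∀ i : ℕ, i ≤ n → n - k ≤ i → 0 < f (t + i)) ∧
  (∀ s : ℕ, s + k ≤ n → ∃ j : ℕ, s ≤ j ∧ j ≤ s + k ∧ f (t + j) ≤ c)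

lemma goodZ_shift {n : ℕ} {c : ℤ} {k : ℕ} {f f' : ℤ → ℤ} {d : ℤ}
    (hf : ∀ j, f' j = f (d + j)) {t : ℤ} (h : GoodZ n c k f' t) : GoodZ n c k f (d + t) := by
  obtain ⟨h1, h2, h3⟩ := h
  refine ⟨by rw [← hf]; simpa using h1, ?_, ?_⟩
  · intro i hi hki
    have := h2 i hi hki
    rwa [hf, ← add_assoc] at this
  · intro s hs
    obtain ⟨j, hj1, hj2, hj3⟩ := h3 s hs
    exact ⟨j, hj1, hj2, by rwa [hf, ← add_assoc] at hj3⟩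

theorem existsUnique_goodZ {n : ℕ} {c : ℤ} (hc : 0 < c) {k : ℕ} (hk : k ≤ n)
    (f : ℤ → ℤ) (hrec : ∀ j, f (j + ((n : ℤ) + 1)) = f j - c) :
    ∃! t : ℤ, GoodZ n c k f t := by
  have hshift := shift_of_rec (n := n) (c := c) (f := f) hrec
  set S : ℤ → Prop := fun r => ∀ i : ℕ, i ≤ k → 0 < f (r + i) with hS
  -- S is nonempty
  have hne : ∃ r, S r := by
    set Q : ℤ := 1 + ∑ i ∈ Finset.range (k + 1), |f i| with hQ
    have hQ0 : ∀ i : ℕ, i ≤ k → 1 + |f i| ≤ Q := by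
      intro i hi
      have : |f i| ≤ ∑ i ∈ Finset.range (k + 1), |f i| :=
        Finset.single_le_sum (f := fun j : ℕ => |f (j : ℤ)|) (fun j _ => abs_nonneg _)
          (Finset.mem_range.mpr (by omega))
      omega
    have hQ1 : 1 ≤ Q := by
      have h1 := hQ0 0 (by omega)
      have h2 := abs_nonneg (f ((0 : ℕ) : ℤ))
      omega
    refine ⟨((n : ℤ) + 1) * (-Q), ?_⟩
    intro i hi
    have e : ((n : ℤ) + 1) * (-Q) + (i : ℤ) = (i : ℤ) + ((n : ℤ) + 1) * (-Q) := by ring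
    rw [e, hshift]
    have h1 : Q ≤ Q * c := le_mul_of_one_le_right (by omega) (by omega)
    have h2 := hQ0 i hi
    have h3 : -|f (i : ℤ)| ≤ f (i : ℤ) := neg_abs_le _
    have : f (i : ℤ) - (-Q) * c = f (i : ℤ) + Q * c := by ring
    omega
  -- S is bounded above
  have hbd : ∃ b, ∀ r, S r → r ≤ b := by
    set M : ℤ := ∑ i ∈ Finset.range (n + 1), |f i| with hM
    have hM0 : 0 ≤ M := Finset.sum_nonneg fun i _ => abs_nonneg _
    refine ⟨((n : ℤ) + 1) * M, ?_⟩
    intro r hr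
    by_contra hcon
    push_neg at hcon
    obtain ⟨q, r', hr', hdec⟩ := exists_decomp n r
    have hfr : f r = f r' - q * c := by
      rw [hdec, show ((n : ℤ) + 1) * q + (r' : ℤ) = (r' : ℤ) + ((n : ℤ) + 1) * q by ring, hshift]
    have hfr' : f (r' : ℤ) ≤ M := by
      have h1 : |f (r' : ℤ)| ≤ M :=
        Finset.single_le_sum (fun j (_ : j ∈ Finset.range (n + 1)) => abs_nonneg (f j))
          (by simp; omega)
      have := le_abs_self (f (r' : ℤ))
      omega
    have hqM : M ≤ q := by nlinarith
    have hqc : q ≤ q * c := le_mul_of_one_le_right (by omega) (by omega)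
    have h0 := hr 0 (by omega)
    simp at h0
    omega
  obtain ⟨rs, hrsS, hrsmax⟩ := Int.exists_greatest_of_bdd hbd hne
  set t0 : ℤ := rs + (k : ℤ) - (n : ℤ) with ht0
  have hgood : GoodZ n c k f t0 := by
    refine ⟨?_, ?_, ?_⟩
    · -- f t0 ≤ c
      have hnot : ¬ S (rs + 1) := by
        intro h
        have := hrsmax _ h
        omega
      simp only [hS] at hnot
      push_neg at hnot
      obtain ⟨i, hi, hfi⟩ := hnot
      have hik : i = k := by
        by_contra hik
        have h3 := hrsS (i + 1) (by omega)
        rw [show rs + ((i + 1 : ℕ) : ℤ) = rs + 1 + (i : ℤ) by push_cast; ring] at h3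
        omega
      subst hik
      have h1 := hrec t0
      have e : t0 + ((n : ℤ) + 1) = rs + 1 + (i : ℤ) := by omega
      rw [e] at h1
      omega
    · intro i hi hki
      have h := hrsS (i - (n - k)) (by omega)
      rwa [show rs + ((i - (n - k) : ℕ) : ℤ) = t0 + (i : ℤ) by push_cast; omega] at h
    · intro s hs
      by_contra hno
      push_neg at hno
      have hS' : S (t0 + s + ((n : ℤ) + 1)) := by
        intro i hi
        have h1 := hno (s + i) (by omega) (by omega)
        have h2 := hrec (t0 + (s + i : ℕ))
        have e : t0 + ((s + i : ℕ) : ℤ) + ((n : ℤ) + 1) = t0 + (s : ℤ) + ((n : ℤ) + 1) + (i : ℤ) := by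
          push_cast; ring
        rw [e] at h2
        omega
      have := hrsmax _ hS'
      omega
  refine ⟨t0, hgood, ?_⟩
  intro t ht
  obtain ⟨ha, hb, hc'⟩ := ht
  have h1 : S (t + (n : ℤ) - (k : ℤ)) := by
    intro i hi
    have h := hb (n - k + i) (by omega) (by omega)
    rwa [show t + ((n - k + i : ℕ) : ℤ) = t + (n : ℤ) - (k : ℤ) + (i : ℤ) by push_cast; omega] at h
  have hle : t ≤ t0 := by
    have := hrsmax _ h1
    omega
  by_contra hne'
  have hlt : t < t0 := lt_of_le_of_ne hle hne'
  set D : ℤ := rs - t with hD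
  have hD1 : (n : ℤ) - (k : ℤ) + 1 ≤ D := by omega
  set q : ℤ := (D + (k : ℤ)) / ((n : ℤ) + 1) with hq
  have hm1 : 0 ≤ (D + (k : ℤ)) % ((n : ℤ) + 1) := Int.emod_nonneg _ (by positivity)
  have hm2 : (D + (k : ℤ)) % ((n : ℤ) + 1) < (n : ℤ) + 1 := Int.emod_lt_of_pos _ (by positivity)
  have he := Int.mul_ediv_add_emod (D + (k : ℤ)) ((n : ℤ) + 1)
  rw [← hq] at he
  have hq1 : ((n : ℤ) + 1) * q ≤ D + k := by omega
  have hq2 : D + (k : ℤ) - (n : ℤ) ≤ ((n : ℤ) + 1) * q := by omega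
  have hqpos : 1 ≤ q := by
    by_contra hcon
    push_neg at hcon
    have h2 : ((n : ℤ) + 1) * q ≤ ((n : ℤ) + 1) * 0 := by
      apply mul_le_mul_of_nonneg_left (by omega) (by positivity)
    rw [mul_zero] at h2
    omega
  set s : ℤ := D - ((n : ℤ) + 1) * q with hs
  have hs1 : -(k : ℤ) ≤ s := by omega
  have hs2 : s ≤ (n : ℤ) - (k : ℤ) := by omega
  have hwin : ∀ i : ℕ, i ≤ k → c < f (rs - ((n : ℤ) + 1) * q + i) := by
    intro i hi
    have h1 := hrsS i hi
    have e : rs - ((n : ℤ) + 1) * q + (i : ℤ) = (rs + (i : ℤ)) + ((n : ℤ) + 1) * (-q) := by ring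
    rw [e, hshift]
    have hqc : c ≤ q * c := le_mul_of_one_le_left (by omega) hqpos
    have e2 : f (rs + (i : ℤ)) - -q * c = f (rs + (i : ℤ)) + q * c := by ring
    rw [e2]
    omega
  rcases le_or_gt 0 s with hs0 | hs0
  · obtain ⟨j, hj1, hj2, hj3⟩ := hc' s.toNat (by omega)
    have h2 := hwin (j - s.toNat) (by omega)
    rw [show rs - ((n : ℤ) + 1) * q + ((j - s.toNat : ℕ) : ℤ) = t + (j : ℤ) by push_cast; omega] at h2
    omega
  · have h2 := hwin (-s).toNat (by omega)
    rw [show rs - ((n : ℤ) + 1) * q + (((-s).toNat : ℕ) : ℤ) = t by push_cast; omega] at h2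
    omega


/-- Translation between `IsSkeletalZ` of a window and `GoodZ`. -/
lemma isSkeletal_winZ_iff {n : ℕ} (c m : ℤ) (k : ℕ) (f : ℤ → ℤ) (t : ℤ) :
    IsSkeletalZ c m k (winZ n f t) ↔
      ((∀ i : ℕ, i < n → f (t + i + 1) ≤ f (t + i) + m) ∧ GoodZ n c k f t) := by
  constructor
  · rintro ⟨harea, h0, hpos, hno⟩
    refine ⟨?_, ?_, ?_, ?_⟩
    · intro i hi
      have h := harea ⟨i, hi⟩
      simp only [winZ, Fin.val_succ, Fin.coe_castSucc] at h
      rwa [show t + ((i + 1 : ℕ) : ℤ) = t + (i : ℤ) + 1 by push_cast; ring] at h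
    · simpa [winZ] using h0
    · intro i hi hki
      have h := hpos ⟨i, by omega⟩ (by simpa using hki)
      simpa [winZ] using h
    · intro s hs
      by_contra hcon
      push_neg at hcon
      refine hno ⟨s, hs, ?_⟩
      intro j hj1 hj2
      have := hcon j hj1 hj2
      simpa [winZ] using this
  · rintro ⟨hstep, h0, hpos, hwit⟩
    refine ⟨?_, ?_, ?_, ?_⟩
    · intro i
      have h := hstep i i.isLt
      simp only [winZ, Fin.val_succ, Fin.coe_castSucc]
      rwa [show t + ((i : ℕ) + 1 : ℕ) = t + ((i : ℕ) : ℤ) + 1 by push_cast; ring]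
    · simpa [winZ] using h0
    · intro i hi
      have h := hpos (i : ℕ) (by omega) hi
      simpa [winZ] using h
    · rintro ⟨s, hs, hall⟩
      obtain ⟨j, hj1, hj2, hj3⟩ := hwit s hs
      have := hall ⟨j, by omega⟩ (by simpa using hj1) (by simpa using hj2)
      simp only [winZ] at this
      omega

/-- A skeletal vector extends to a function with bounded steps everywhere. -/
lemma extZ_step {n : ℕ} {c m : ℤ} (hm : 0 < m) {k : ℕ} {g : Fin (n + 1) → ℤ}
    (hg : IsSkeletalZ c m k g) (j : ℤ) : extZ n c g (j + 1) ≤ extZ n c g j + m := by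
  obtain ⟨harea, h0, hpos, _⟩ := hg
  obtain ⟨q, r, hr, rfl⟩ := exists_decomp n j
  rcases lt_or_eq_of_le hr with hrn | hrn
  · have e : ((n : ℤ) + 1) * q + (r : ℤ) + 1 = ((n : ℤ) + 1) * q + ((r + 1 : ℕ) : ℤ) := by
      push_cast; ring
    rw [e, extZ_apply n c g q (r + 1) (by omega), extZ_apply n c g q r hr]
    have h := harea ⟨r, hrn⟩
    have e1 : (⟨r, hrn⟩ : Fin n).succ = (⟨r + 1, by omega⟩ : Fin (n + 1)) := rfl
    have e2 : (⟨r, hrn⟩ : Fin n).castSucc = (⟨r, by omega⟩ : Fin (n + 1)) := rfl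
    rw [e1, e2] at h
    omega
  · have hrn' : (r : ℤ) = (n : ℤ) := by omega
    have e : ((n : ℤ) + 1) * q + (r : ℤ) + 1 = ((n : ℤ) + 1) * (q + 1) + ((0 : ℕ) : ℤ) := by
      rw [hrn']; push_cast; ring
    rw [e, extZ_apply n c g (q + 1) 0 (by omega), extZ_apply n c g q r hr]
    have h1 : 0 < g ⟨r, by omega⟩ := hpos ⟨r, by omega⟩ (by simp; omega)
    have h2 : g ⟨0, by omega⟩ ≤ c := by
      have : (0 : Fin (n + 1)) = ⟨0, by omega⟩ := rfl
      rwa [this] at h0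
    have hc2 : (q + 1) * c = q * c + c := by ring
    omega


/-- `stat` is invariant under the cycling operator. -/
lemma statF_cycZ {n : ℕ} {c : ℤ} (F : ℝ → ℝ) (hF : ∀ z : ℝ, F z = F ((c : ℝ) - z))
    (g : Fin (n + 1) → ℤ) : statF F (cycZ c g) = statF F g := by
  classical
  have vadd : ∀ a : Fin (n + 1), (a : ℕ) < n → ((a + 1 : Fin (n + 1)) : ℕ) = (a : ℕ) + 1 := by
    intro a ha
    rw [Fin.val_add_one, if_neg]
    intro hco
    rw [Fin.ext_iff, Fin.val_last] at hco
    omega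
  have vsub : ∀ a : Fin (n + 1), (a : ℕ) ≠ 0 → ((a - 1 : Fin (n + 1)) : ℕ) = (a : ℕ) - 1 := by
    intro a ha
    rw [Fin.coe_sub_one, if_neg]
    intro hco
    rw [Fin.ext_iff, Fin.val_zero] at hco
    omega
  unfold statF
  refine Finset.sum_nbij'
    (fun p : Fin (n + 1) × Fin (n + 1) =>
      if (p.2 : ℕ) < n then (p.1 + 1, p.2 + 1) else ((0 : Fin (n + 1)), p.1 + 1))
    (fun p : Fin (n + 1) × Fin (n + 1) =>
      if (p.1 : ℕ) = 0 then (p.2 - 1, Fin.last n) else (p.1 - 1, p.2 - 1))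
    ?_ ?_ ?_ ?_ ?_
  · intro p hp
    simp only [Finset.mem_filter, Finset.mem_univ, true_and, Fin.lt_def] at hp
    have h2 := p.2.isLt
    by_cases h : (p.2 : ℕ) < n
    · rw [if_pos h]
      simp only [Finset.mem_filter, Finset.mem_univ, true_and, Fin.lt_def]
      rw [vadd p.1 (by omega), vadd p.2 h]
      omega
    · rw [if_neg h]
      simp only [Finset.mem_filter, Finset.mem_univ, true_and, Fin.lt_def]
      rw [vadd p.1 (by omega), Fin.val_zero]
      omega
  · intro p hp
    simp only [Finset.mem_filter, Finset.mem_univ, true_and, Fin.lt_def] at hp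
    have h2 := p.2.isLt
    by_cases h : (p.1 : ℕ) = 0
    · rw [if_pos h]
      simp only [Finset.mem_filter, Finset.mem_univ, true_and, Fin.lt_def]
      rw [vsub p.2 (by omega), Fin.val_last]
      omega
    · rw [if_neg h]
      simp only [Finset.mem_filter, Finset.mem_univ, true_and, Fin.lt_def]
      rw [vsub p.1 h, vsub p.2 (by omega)]
      omega
  · intro p hp
    simp only [Finset.mem_filter, Finset.mem_univ, true_and, Fin.lt_def] at hp
    have h2 := p.2.isLt
    by_cases h : (p.2 : ℕ) < n
    · rw [if_pos h, if_neg (by rw [vadd p.1 (by omega)]; omega)]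
      simp only [add_sub_cancel_right]
    · rw [if_neg h, if_pos (by rw [Fin.val_zero])]
      simp only [add_sub_cancel_right]
      refine Prod.ext rfl ?_
      simp only
      rw [Fin.ext_iff, Fin.val_last]
      omega
  · intro p hp
    simp only [Finset.mem_filter, Finset.mem_univ, true_and, Fin.lt_def] at hp
    have h2 := p.2.isLt
    by_cases h : (p.1 : ℕ) = 0
    · rw [if_pos h, if_neg (by rw [Fin.val_last]; omega)]
      refine Prod.ext ?_ ?_
      · simp only
        rw [Fin.ext_iff, Fin.val_zero]
        omega
      · simp only [sub_add_cancel]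
    · rw [if_neg h, if_pos (by rw [vsub p.2 (by omega)]; omega)]
      simp only [sub_add_cancel]
  · intro p hp
    simp only [Finset.mem_filter, Finset.mem_univ, true_and, Fin.lt_def] at hp
    have h2 := p.2.isLt
    by_cases h : (p.2 : ℕ) < n
    · rw [if_pos h]
      simp only [cycZ]
      rw [dif_pos (show (p.1 : ℕ) + 1 < n + 1 by omega),
        dif_pos (show (p.2 : ℕ) + 1 < n + 1 by omega)]
      have e1 : (⟨(p.1 : ℕ) + 1, by omega⟩ : Fin (n + 1)) = p.1 + 1 := by
        rw [Fin.ext_iff, vadd p.1 (by omega)]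
      have e2 : (⟨(p.2 : ℕ) + 1, by omega⟩ : Fin (n + 1)) = p.2 + 1 := by
        rw [Fin.ext_iff, vadd p.2 h]
      rw [e1, e2]
    · rw [if_neg h]
      simp only [cycZ]
      rw [dif_pos (show (p.1 : ℕ) + 1 < n + 1 by omega), dif_neg (show ¬((p.2 : ℕ) + 1 < n + 1) by omega)]
      have e1 : (⟨(p.1 : ℕ) + 1, by omega⟩ : Fin (n + 1)) = p.1 + 1 := by
        rw [Fin.ext_iff, vadd p.1 (by omega)]
      rw [e1]
      push_cast
      rw [hF ((g (p.1 + 1) : ℝ) - ((g 0 : ℝ) - (c : ℝ)))]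
      ring_nf

/-- Successive windows are related by the cycling operator. -/
lemma winZ_succ {n : ℕ} {c : ℤ} {f : ℤ → ℤ}
    (hrec : ∀ j, f (j + ((n : ℤ) + 1)) = f j - c) (t : ℤ) :
    winZ n f (t + 1) = cycZ c (winZ n f t) := by
  funext i
  simp only [winZ, cycZ]
  split
  · rename_i h
    congr 1
    push_cast
    ring
  · rename_i h
    have hi : (i : ℕ) = n := by have := i.isLt; omega
    have e : t + 1 + ((i : ℕ) : ℤ) = (t + (((0 : Fin (n + 1)) : ℕ) : ℤ)) + ((n : ℤ) + 1) := by
      rw [Fin.val_zero]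
      push_cast
      omega
    rw [e, hrec]

/-- `stat` is constant along windows. -/
lemma statF_winZ {n : ℕ} {c : ℤ} (F : ℝ → ℝ) (hF : ∀ z : ℝ, F z = F ((c : ℝ) - z))
    {f : ℤ → ℤ} (hrec : ∀ j, f (j + ((n : ℤ) + 1)) = f j - c) (t : ℤ) :
    statF F (winZ n f t) = statF F (winZ n f 0) := by
  induction t using Int.induction_on with
  | zero => rfl
  | succ i ih => rw [winZ_succ hrec, statF_cycZ F hF, ih]
  | pred i ih =>
    have h : statF F (winZ n f (-(i : ℤ) - 1 + 1)) = statF F (winZ n f (-(i : ℤ) - 1)) := by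
      rw [winZ_succ hrec, statF_cycZ F hF]
    rw [show -(i : ℤ) - 1 + 1 = -(i : ℤ) by ring] at h
    rw [← h, ih]

end Stmt19Aux


open Stmt19Aux

/-- if `F(z) = F(c - z)` then `stat` is invariant under the cycling
operator, and hence for every `k` the distribution of `stat` on `k`-skeletal area
vectors coincides with its distribution on `(n-1)`-skeletal (Dyck) area vectors,
i.e. the generating functions `Σ t^{stat}` agree. -/
theorem stmt19 (n : ℕ) (c m : ℕ) (hc : 0 < c) (hm : 0 < m)
    (F : ℝ → ℝ) (hF : ∀ z : ℝ, F z = F ((c : ℝ) - z)) :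
    (∀ g : Fin (n + 1) → ℤ, statF F (cycZ (c : ℤ) g) = statF F g) ∧
    (∀ k : ℕ, k ≤ n → ∀ r : ℝ,
      {g : Fin (n + 1) → ℤ | IsSkeletalZ (c : ℤ) (m : ℤ) k g ∧ statF F g = r}.ncard
        = {g : Fin (n + 1) → ℤ |
            IsSkeletalZ (c : ℤ) (m : ℤ) n g ∧ statF F g = r}.ncard) := by

  classical
  have hc' : (0 : ℤ) < (c : ℤ) := by exact_mod_cast hc
  have hm' : (0 : ℤ) < (m : ℤ) := by exact_mod_cast hm
  have hF' : ∀ z : ℝ, F z = F ((((c : ℤ)) : ℝ) - z) := by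
    intro z; rw [hF z]; norm_num
  refine ⟨fun g => statF_cycZ F hF' g, ?_⟩
  intro k hk r
  have hrecg : ∀ g : Fin (n + 1) → ℤ, ∀ j,
      extZ n (c : ℤ) g (j + ((n : ℤ) + 1)) = extZ n (c : ℤ) g j - (c : ℤ) :=
    fun g => extZ_rec n (c : ℤ) g
  have hEU : ∀ g : Fin (n + 1) → ℤ, ∃! t, GoodZ n (c : ℤ) n (extZ n (c : ℤ) g) t :=
    fun g => existsUnique_goodZ hc' le_rfl _ (hrecg g)
  choose T hT hTu using hEU
  set φ : (Fin (n + 1) → ℤ) → (Fin (n + 1) → ℤ) :=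
    fun g => winZ n (extZ n (c : ℤ) g) (T g) with hφ
  set A := {g : Fin (n + 1) → ℤ | IsSkeletalZ (c : ℤ) (m : ℤ) k g ∧ statF F g = r} with hA
  set B := {g : Fin (n + 1) → ℤ | IsSkeletalZ (c : ℤ) (m : ℤ) n g ∧ statF F g = r} with hB
  have skel_good : ∀ (k' : ℕ) (g : Fin (n + 1) → ℤ), IsSkeletalZ (c : ℤ) (m : ℤ) k' g →
      GoodZ n (c : ℤ) k' (extZ n (c : ℤ) g) 0 := by
    intro k' g hg
    have h := (isSkeletal_winZ_iff (n := n) (c : ℤ) (m : ℤ) k' (extZ n (c : ℤ) g) 0).mp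
      (by rwa [winZ_extZ_zero])
    exact h.2
  have good_skel : ∀ (k1 k2 : ℕ) (g : Fin (n + 1) → ℤ) (t : ℤ),
      IsSkeletalZ (c : ℤ) (m : ℤ) k1 g → GoodZ n (c : ℤ) k2 (extZ n (c : ℤ) g) t →
      IsSkeletalZ (c : ℤ) (m : ℤ) k2 (winZ n (extZ n (c : ℤ) g) t) := by
    intro k1 k2 g t hg hgood
    refine (isSkeletal_winZ_iff (n := n) (c : ℤ) (m : ℤ) k2 (extZ n (c : ℤ) g) t).mpr ⟨?_, hgood⟩
    intro i hi
    exact extZ_step hm' hg (t + i)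
  have stat_win : ∀ (g : Fin (n + 1) → ℤ) (t : ℤ),
      statF F (winZ n (extZ n (c : ℤ) g) t) = statF F g := by
    intro g t
    rw [statF_winZ F hF' (hrecg g) t, winZ_extZ_zero]
  have hmaps : ∀ g ∈ A, φ g ∈ B := by
    intro g hg
    exact ⟨good_skel k n g (T g) hg.1 (hT g), by rw [hφ]; rw [stat_win g (T g)]; exact hg.2⟩
  have hinj : Set.InjOn φ A := by
    intro g hg g' hg' hfe
    have hE : ∀ j, extZ n (c : ℤ) g (T g + j) = extZ n (c : ℤ) g' (T g' + j) := by
      intro j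
      have h1 := extZ_winZ (hrecg g) (T g) j
      have h2 := extZ_winZ (hrecg g') (T g') j
      rw [← h1, ← h2]
      show extZ n (c : ℤ) (φ g) j = extZ n (c : ℤ) (φ g') j
      rw [hfe]
    have hg'0 : GoodZ n (c : ℤ) k (extZ n (c : ℤ) g') 0 := skel_good k g' hg'.1
    have hf2 : ∀ j, extZ n (c : ℤ) g' j = extZ n (c : ℤ) g ((T g - T g') + j) := by
      intro j
      have h := hE (j - T g')
      rw [show T g' + (j - T g') = j by ring] at h
      rw [← h, show T g + (j - T g') = T g - T g' + j by ring]
    have hshifted : GoodZ n (c : ℤ) k (extZ n (c : ℤ) g) ((T g - T g') + 0) :=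
      goodZ_shift hf2 hg'0
    have hg0 : GoodZ n (c : ℤ) k (extZ n (c : ℤ) g) 0 := skel_good k g hg.1
    obtain ⟨tk, htk, htku⟩ := existsUnique_goodZ hc' hk (extZ n (c : ℤ) g) (hrecg g)
    have e1 := htku _ hshifted
    have e2 := htku _ hg0
    have hTT : T g = T g' := by omega
    funext i
    have h := hE ((((i : ℕ) : ℤ)) - T g)
    rw [hTT] at h
    rw [show T g' + (((i : ℕ) : ℤ) - T g') = ((i : ℕ) : ℤ) by ring] at h
    rw [extZ_coe n (c : ℤ) g (i : ℕ) (by omega), extZ_coe n (c : ℤ) g' (i : ℕ) (by omega)] at h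
    simpa using h
  have hsurj : ∀ h ∈ B, ∃ g ∈ A, φ g = h := by
    intro h hBh
    obtain ⟨tk, htk, htku⟩ := existsUnique_goodZ hc' hk (extZ n (c : ℤ) h) (hrecg h)
    refine ⟨winZ n (extZ n (c : ℤ) h) tk, ⟨good_skel n k h tk hBh.1 htk, ?_⟩, ?_⟩
    · rw [stat_win h tk]; exact hBh.2
    · set g := winZ n (extZ n (c : ℤ) h) tk with hg
      have hEg : ∀ j, extZ n (c : ℤ) g j = extZ n (c : ℤ) h (tk + j) := extZ_winZ (hrecg h) tk
      have hh0 : GoodZ n (c : ℤ) n (extZ n (c : ℤ) h) 0 := skel_good n h hBh.1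
      have hf2 : ∀ j, extZ n (c : ℤ) h j = extZ n (c : ℤ) g ((-tk) + j) := by
        intro j
        rw [hEg ((-tk) + j), show tk + ((-tk) + j) = j by ring]
      have hsh : GoodZ n (c : ℤ) n (extZ n (c : ℤ) g) ((-tk) + 0) := goodZ_shift hf2 hh0
      have hTg : (-tk) + 0 = T g := hTu g _ hsh
      funext i
      show winZ n (extZ n (c : ℤ) g) (T g) i = h i
      rw [show winZ n (extZ n (c : ℤ) g) (T g) i = extZ n (c : ℤ) g (T g + ((i : ℕ) : ℤ)) from rfl]
      rw [← hTg, hEg, show tk + ((-tk) + 0 + ((i : ℕ) : ℤ)) = ((i : ℕ) : ℤ) by ring]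
      rw [extZ_coe n (c : ℤ) h (i : ℕ) (by omega)]
  have himg : φ '' A = B := by
    apply Set.Subset.antisymm
    · rintro _ ⟨g, hgA, rfl⟩
      exact hmaps g hgA
    · intro h hBh
      obtain ⟨g, hgA, hgh⟩ := hsurj h hBh
      exact ⟨g, hgA, hgh⟩
  calc A.ncard = (φ '' A).ncard := (Set.ncard_image_of_injOn hinj).symm
    _ = B.ncard := by rw [himg]
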